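/- Let δ ≥ 3 and C₀ > 2δ+3 even, and let M be bipartite magic (⌊δ/2⌋ ≤ M, M+1 ≤ ⌊(C₀−δ−1)/2⌋). Let A and B be two finite metric spaces with integer distances at most δ in which all triangles have even perimeter less than C₀ and are metric. Fix x ∈ A, y ∈ B, and define d' on the disjoint union of A and B extending both metrics by: d'(x', y') = M if d_A(x,x') + d_B(y,y') is even, and d'(x',y') = M+1 otherwise, for x' ∈ A, y' ∈ B. Then every triangle of (A ⊔ B, d') is metric, has even perimeter, and has perimeter less than C₀; i.e., the disjoint union completes to a space in the bipartite class A^δ_{∞,0,C₀,2δ+1}. -/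
import Mathlib


/-- The distance on the disjoint union `A ⊕ B` extending `dA` and `dB`, where a cross
pair `(x', y')` gets distance `M` if `dA x x' + dB y y'` is even and `M + 1` otherwise. -/
def unionDist {A B : Type} (dA : A → A → ℕ) (dB : B → B → ℕ) (x : A) (y : B) (M : ℕ) :
    A ⊕ B → A ⊕ B → ℕ
  | Sum.inl a, Sum.inl a' => dA a a'
  | Sum.inr b, Sum.inr b' => dB b b'
  | Sum.inl a, Sum.inr b' => if Even (dA x a + dB y b') then M else M + 1
  | Sum.inr b, Sum.inl a' => if Even (dA x a' + dB y b) then M else M + 1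

/-- Joint embedding for the bipartite class `A^δ_{∞,0,C₀,2δ+1}`: if `A` and `B` are
finite integer metric spaces of diameter `≤ δ` in which every triangle is metric with
even perimeter `< C₀`, and `M` is bipartite magic, then every triangle of the disjoint
union equipped with `unionDist` is metric, has even perimeter, and has perimeter `< C₀`. -/
theorem stmt19 {A B : Type} [Finite A] [Finite B]
    (δ C₀ M : ℕ) (hδ : 3 ≤ δ) (hC₀e : Even C₀) (hC₀ : 2 * δ + 3 < C₀)
    (hM1 : δ / 2 ≤ M) (hM2 : M + 1 ≤ (C₀ - δ - 1) / 2)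
    (dA : A → A → ℕ) (dB : B → B → ℕ)
    (hA0 : ∀ a a', dA a a' = 0 ↔ a = a') (hAs : ∀ a a', dA a a' = dA a' a)
    (hAb : ∀ a a', dA a a' ≤ δ)
    (hAt : ∀ a a' a'', dA a a'' ≤ dA a a' + dA a' a'')
    (hAe : ∀ a a' a'', Even (dA a a' + dA a' a'' + dA a'' a))
    (hAC : ∀ a a' a'', dA a a' + dA a' a'' + dA a'' a < C₀)
    (hB0 : ∀ b b', dB b b' = 0 ↔ b = b') (hBs : ∀ b b', dB b b' = dB b' b)
    (hBb : ∀ b b', dB b b' ≤ δ)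
    (hBt : ∀ b b' b'', dB b b'' ≤ dB b b' + dB b' b'')
    (hBe : ∀ b b' b'', Even (dB b b' + dB b' b'' + dB b'' b))
    (hBC : ∀ b b' b'', dB b b' + dB b' b'' + dB b'' b < C₀)
    (x : A) (y : B) :
    ∀ p q r : A ⊕ B,
      unionDist dA dB x y M p r ≤
          unionDist dA dB x y M p q + unionDist dA dB x y M q r ∧
      Even (unionDist dA dB x y M p q + unionDist dA dB x y M q r +
          unionDist dA dB x y M r p) ∧
      unionDist dA dB x y M p q + unionDist dA dB x y M q r +
          unionDist dA dB x y M r p < C₀ := by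
  have hcr : ∀ a b, (if Even (dA x a + dB y b) then M else M + 1)
      = M + (dA x a + dB y b) % 2 := by
    intro a b
    rcases Nat.even_or_odd (dA x a + dB y b) with h | h
    · rw [if_pos h]; have := Nat.even_iff.mp h; omega
    · rw [if_neg (Nat.not_even_iff_odd.mpr h)]; have := Nat.odd_iff.mp h; omega
  have hAp : ∀ a a', (dA a a' + dA x a + dA x a') % 2 = 0 := by
    intro a a'
    have h1 := Nat.even_iff.mp (hAe x a a')
    have h2 := hAs a' x
    omega
  have hBp : ∀ b b', (dB b b' + dB y b + dB y b') % 2 = 0 := by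
    intro b b'
    have h1 := Nat.even_iff.mp (hBe y b b')
    have h2 := hBs b' y
    omega
  intro p q r
  rcases p with a | b <;> rcases q with a' | b' <;> rcases r with a'' | b'' <;>
    simp only [unionDist, hcr]
  · exact ⟨hAt a a' a'', hAe a a' a'', hAC a a' a''⟩
  · have h1 := hAp a a'
    have h2 := hAb a a'
    exact ⟨by omega, Nat.even_iff.mpr (by omega), by omega⟩
  · have h1 := hAp a a''
    have h2 := hAb a a''
    have h3 := hAs a a''
    exact ⟨by omega, Nat.even_iff.mpr (by omega), by omega⟩
  · have h1 := hBp b' b''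
    have h2 := hBb b' b''
    exact ⟨by omega, Nat.even_iff.mpr (by omega), by omega⟩
  · have h1 := hAp a' a''
    have h2 := hAb a' a''
    exact ⟨by omega, Nat.even_iff.mpr (by omega), by omega⟩
  · have h1 := hBp b b''
    have h2 := hBb b b''
    have h3 := hBs b b''
    exact ⟨by omega, Nat.even_iff.mpr (by omega), by omega⟩
  · have h1 := hBp b b'
    have h2 := hBb b b'
    exact ⟨by omega, Nat.even_iff.mpr (by omega), by omega⟩
  · exact ⟨hBt b b' b'', hBe b b' b'', hBC b b' b''⟩
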